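/- Let t₀ < 0, let C₀ > 0, r > 0, B ≥ 0 and M₀ ≥ 0 be constants, and let f : [t₀, 0) → [0,∞) be integrable; set C₁ = (C₀/r) ∫_{t₀}^0 f(τ) dτ. Let E_k : [t₀,0) → [0, M₀], k = 0, 1, 2, …, be measurable functions satisfying, for every k ≥ 0 and every t ∈ [t₀, 0), the inequality E_k(t) ≤ B + (C₀/r) ∫_{t₀}^t f(τ) ( Σ_{j=1}^∞ 2^{−j} E_j(τ) ) dτ. Then for every M ≥ 1 and every t ∈ [t₀,0), E₀(t) ≤ B e^{C₁} + (C₁^M / M!) M₀; consequently E₀(t) ≤ B e^{C₁} for all t ∈ [t₀,0). -/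

import Mathlib

open MeasureTheory Set

open Filter

section Aux
variable {g : ℝ → ℝ} {t₀ : ℝ}

-- basic facts about the primitive
lemma aux_mono (hg0 : ∀ x, 0 ≤ g x) (hgi : Integrable g) :
    Monotone (fun u => ∫ τ in t₀..u, g τ) := by
  intro a b hab
  have h1 := intervalIntegral.integral_add_adjacent_intervals
    (hgi.intervalIntegrable (a := t₀) (b := a)) (hgi.intervalIntegrable (a := a) (b := b))
  have h2 : 0 ≤ ∫ τ in a..b, g τ :=
    intervalIntegral.integral_nonneg hab (fun x _ => hg0 x)
  simp only []
  linarith [h1, h2]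

lemma aux_cont (hgi : Integrable g) : Continuous (fun u => ∫ τ in t₀..u, g τ) :=
  intervalIntegral.continuous_primitive (fun _ _ => hgi.intervalIntegrable) t₀

lemma aux_Ico_eq (hgi : Integrable g) {a b : ℝ} (hab : a ≤ b) :
    ∫ τ in Ico a b, g τ = (∫ τ in t₀..b, g τ) - ∫ τ in t₀..a, g τ := by
  have h1 := intervalIntegral.integral_add_adjacent_intervals
    (hgi.intervalIntegrable (a := t₀) (b := a)) (hgi.intervalIntegrable (a := a) (b := b))
  have h2 : ∫ τ in Ico a b, g τ = ∫ τ in a..b, g τ := by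
    rw [intervalIntegral.integral_of_le hab, ← integral_Icc_eq_integral_Ioc,
      ← integral_Icc_eq_integral_Ico]
  linarith [h1, h2]
end Aux

section Aux2
variable {g : ℝ → ℝ} {t₀ : ℝ}

lemma aux_F_nonneg (hg0 : ∀ x, 0 ≤ g x) (hgi : Integrable g) {τ : ℝ} (h : t₀ ≤ τ) :
    0 ≤ ∫ s in t₀..τ, g s := by
  have := aux_mono (t₀ := t₀) hg0 hgi h
  simpa using this

lemma aux_int (hgm : Measurable g) (hg0 : ∀ x, 0 ≤ g x) (hgi : Integrable g)
    {a b : ℝ} (ha : t₀ ≤ a) (hab : a ≤ b) (n : ℕ) :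
    IntegrableOn (fun τ => g τ * (∫ s in t₀..τ, g s) ^ n) (Ico a b) := by
  set F : ℝ → ℝ := fun u => ∫ s in t₀..u, g s with hF
  have hFm : Measurable F := (aux_cont hgi).measurable
  refine Integrable.mono' ((hgi.restrict (s := Ico a b)).const_mul ((F b) ^ n))
    ((hgm.mul (hFm.pow_const n)).aestronglyMeasurable) ?_
  filter_upwards [ae_restrict_mem measurableSet_Ico] with τ hτ
  have h0 : 0 ≤ F τ := aux_F_nonneg hg0 hgi (ha.trans hτ.1)
  have h1 : F τ ≤ F b := aux_mono hg0 hgi hτ.2.le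
  have : g τ * F τ ^ n ≤ F b ^ n * g τ := by
    rw [mul_comm]
    exact mul_le_mul_of_nonneg_right (pow_le_pow_left₀ h0 h1 n) (hg0 τ)
  rw [Real.norm_eq_abs, abs_of_nonneg (mul_nonneg (hg0 τ) (pow_nonneg h0 n))]
  exact this

lemma aux_piece (hgm : Measurable g) (hg0 : ∀ x, 0 ≤ g x) (hgi : Integrable g)
    {a b : ℝ} (ha : t₀ ≤ a) (hab : a ≤ b) (n : ℕ) :
    ∫ τ in Ico a b, g τ * (∫ s in t₀..τ, g s) ^ n
      ≤ ((∫ s in t₀..b, g s) ^ n) * ((∫ s in t₀..b, g s) - ∫ s in t₀..a, g s) := by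
  set F : ℝ → ℝ := fun u => ∫ s in t₀..u, g s with hF
  have step1 : ∫ τ in Ico a b, g τ * F τ ^ n ≤ ∫ τ in Ico a b, g τ * F b ^ n := by
    refine setIntegral_mono_on (aux_int hgm hg0 hgi ha hab n)
      ((hgi.restrict (s := Ico a b)).mul_const _) measurableSet_Ico ?_
    intro τ hτ
    have h0 : 0 ≤ F τ := aux_F_nonneg hg0 hgi (ha.trans hτ.1)
    have h1 : F τ ≤ F b := aux_mono hg0 hgi hτ.2.le
    exact mul_le_mul_of_nonneg_left (pow_le_pow_left₀ h0 h1 n) (hg0 τ)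
  have step2 : ∫ τ in Ico a b, g τ * F b ^ n = (F b ^ n) * ∫ τ in Ico a b, g τ := by
    rw [integral_mul_const, mul_comm]
  rw [step2, aux_Ico_eq hgi hab] at step1
  exact step1
end Aux2

section Aux3

lemma aux_split {h : ℝ → ℝ} : ∀ (m : ℕ) (s : ℕ → ℝ), (∀ i < m, s i ≤ s (i + 1)) →
    IntegrableOn h (Ico (s 0) (s m)) →
    ∫ τ in Ico (s 0) (s m), h τ = ∑ i ∈ Finset.range m, ∫ τ in Ico (s i) (s (i + 1)), h τ := by
  intro m
  induction m with
  | zero => simp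
  | succ m IH =>
    intro s hs hint
    have hmono : ∀ j, j ≤ m + 1 → s 0 ≤ s j := by
      intro j hj
      induction j with
      | zero => exact le_refl _
      | succ j IHj =>
        exact (IHj (Nat.le_of_succ_le hj)).trans (hs j (Nat.lt_of_succ_le hj))
    have h1 : s 0 ≤ s m := hmono m (Nat.le_succ m)
    have h2 : s m ≤ s (m + 1) := hs m (Nat.lt_succ_self m)
    have hu : Ico (s 0) (s m) ∪ Ico (s m) (s (m + 1)) = Ico (s 0) (s (m + 1)) :=
      Ico_union_Ico_eq_Ico h1 h2
    have hint1 : IntegrableOn h (Ico (s 0) (s m)) :=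
      hint.mono_set (by rw [← hu]; exact subset_union_left)
    have hint2 : IntegrableOn h (Ico (s m) (s (m + 1))) :=
      hint.mono_set (by rw [← hu]; exact subset_union_right)
    rw [← hu, setIntegral_union (Ico_disjoint_Ico_same) measurableSet_Ico hint1 hint2,
      Finset.sum_range_succ, IH s (fun i hi => hs i (hi.trans (Nat.lt_succ_self m))) hint1]

lemma aux_pow_ineq (n : ℕ) : ∀ x : ℝ, 0 ≤ x → (n + 1 : ℝ) * x ^ n ≤ (x + 1) ^ (n + 1) - x ^ (n + 1) := by
  induction n with
  | zero => intro x hx; norm_num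
  | succ n IH =>
    intro x hx
    have h := IH x hx
    have hp : (0:ℝ) ≤ x ^ n := pow_nonneg hx n
    have h2 := mul_le_mul_of_nonneg_left h (by linarith : (0:ℝ) ≤ x + 1)
    have e2 : x ^ (n+1+1) = x * x^(n+1) := by ring
    have e3 : x ^ (n+1) = x * x^n := by ring
    have e4 : (x+1) ^ (n+1+1) = (x+1) * (x+1)^(n+1) := by ring
    rw [e3] at h2
    push_cast
    rw [e2, e4, e3]
    nlinarith [mul_nonneg hx hp, hp, hx]

lemma aux_sum_pow (n m : ℕ) :
    ∑ i ∈ Finset.range m, ((i : ℝ) + 1) ^ n ≤ ((m : ℝ) + 1) ^ (n + 1) / (n + 1) := by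
  set f : ℕ → ℝ := fun i => ((i:ℝ)+1)^(n+1) with hf
  have key : ∀ i : ℕ, ((i : ℝ) + 1) ^ n ≤ (f (i+1) - f i) / (n + 1) := by
    intro i
    rw [le_div_iff₀ (by positivity)]
    have h := aux_pow_ineq n ((i : ℝ) + 1) (by positivity)
    simp only [hf]
    push_cast
    nlinarith [h]
  calc ∑ i ∈ Finset.range m, ((i : ℝ) + 1) ^ n
      ≤ ∑ i ∈ Finset.range m, (f (i+1) - f i) / (n + 1) := Finset.sum_le_sum fun i _ => key i
    _ = (∑ i ∈ Finset.range m, (f (i+1) - f i)) / (n + 1) := by rw [Finset.sum_div]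
    _ = (f m - f 0) / (n+1) := by rw [Finset.sum_range_sub f]
    _ ≤ ((m:ℝ)+1)^(n+1) / (n+1) := by
        have h1 : f m - f 0 ≤ ((m:ℝ)+1)^(n+1) := by
          have h0 : f 0 = 1 := by simp [hf]
          rw [h0, hf]
          linarith [le_refl (((m:ℝ)+1)^(n+1))]
        gcongr
end Aux3

lemma aux_key {g : ℝ → ℝ} {t₀ : ℝ} (hgm : Measurable g) (hg0 : ∀ x, 0 ≤ g x)
    (hgi : Integrable g) (n : ℕ) {t : ℝ} (ht : t₀ ≤ t) :
    ∫ τ in Ico t₀ t, g τ * (∫ s in t₀..τ, g s) ^ n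
      ≤ (∫ s in t₀..t, g s) ^ (n + 1) / (n + 1) := by
  set F : ℝ → ℝ := fun u => ∫ s in t₀..u, g s with hF
  show ∫ τ in Ico t₀ t, g τ * F τ ^ n ≤ F t ^ (n + 1) / (n + 1)
  have piece : ∀ {a b : ℝ}, t₀ ≤ a → a ≤ b →
      ∫ τ in Ico a b, g τ * F τ ^ n ≤ F b ^ n * (F b - F a) :=
    fun ha hab => aux_piece hgm hg0 hgi ha hab n
  have hFt0 : F t₀ = 0 := intervalIntegral.integral_same
  have hc0 : 0 ≤ F t := aux_F_nonneg hg0 hgi ht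
  rcases eq_or_lt_of_le hc0 with hc | hc
  · -- F t = 0
    have h0 : ∫ τ in Ico t₀ t, g τ * F τ ^ n ≤ F t ^ n * (F t - F t₀) :=
      piece (le_refl t₀) ht
    rw [hFt0, ← hc] at h0
    simp only [sub_zero, mul_zero] at h0
    rw [← hc]
    calc ∫ τ in Ico t₀ t, g τ * F τ ^ n ≤ 0 := h0
      _ ≤ (0:ℝ) ^ (n+1) / (n+1) := by positivity
  · -- F t > 0
    set c : ℝ := F t with hcdef
    have main : ∀ m : ℕ, 1 ≤ m →
        ∫ τ in Ico t₀ t, g τ * F τ ^ n ≤ (c * (((m:ℝ)+1)/m)) ^ (n+1) / (n+1) := by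
      intro m hm
      have hm0 : (0:ℝ) < m := by exact_mod_cast hm
      have hcm : 0 < c / m := div_pos hc hm0
      have hex : ∀ i : ℕ, ∃ x, x ∈ Icc t₀ t ∧ F x = min ((i:ℝ) * (c / m)) c := by
        intro i
        have hmem : min ((i:ℝ) * (c / m)) c ∈ Icc (F t₀) (F t) := by
          rw [hFt0]
          exact ⟨le_min (mul_nonneg i.cast_nonneg hcm.le) hc0, min_le_right _ _⟩
        obtain ⟨x, hx1, hx2⟩ := intermediate_value_Icc ht ((aux_cont hgi).continuousOn) hmem
        exact ⟨x, hx1, hx2⟩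
      choose s hs hFs using hex
      have hmin : ∀ i : ℕ, i ≤ m → min ((i:ℝ) * (c / m)) c = (i:ℝ) * (c / m) := by
        intro i hi
        apply min_eq_left
        calc (i:ℝ) * (c/m) ≤ (m:ℝ) * (c/m) := by
              apply mul_le_mul_of_nonneg_right _ hcm.le
              exact_mod_cast hi
          _ = c := by field_simp
      have hsmono : ∀ i, i < m → s i ≤ s (i+1) := by
        intro i hi
        by_contra hcon
        push_neg at hcon
        have h1 : F (s (i+1)) ≤ F (s i) := aux_mono hg0 hgi hcon.le
        rw [hFs, hFs, hmin i hi.le, hmin (i+1) hi] at h1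
        push_cast at h1
        nlinarith
      have hs0m : ∀ j, j ≤ m → s 0 ≤ s j := by
        intro j hj
        induction j with
        | zero => exact le_refl _
        | succ j IHj =>
          exact (IHj (Nat.le_of_succ_le hj)).trans (hsmono j (Nat.lt_of_succ_le hj))
      have hFs0 : F (s 0) = 0 := by
        rw [hFs]
        push_cast
        rw [zero_mul]
        exact min_eq_left hc0
      have hFsm : F (s m) = c := by
        rw [hFs, hmin m (le_refl m)]; field_simp
      have hint : ∀ a b : ℝ, t₀ ≤ a → IntegrableOn (fun τ => g τ * F τ ^ n) (Ico a b) := by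
        intro a b haa
        rcases le_or_gt a b with hab | hab
        · exact aux_int hgm hg0 hgi haa hab n
        · rw [Ico_eq_empty (not_lt.mpr hab.le)]; exact integrableOn_empty
      have hts0 : t₀ ≤ s 0 := (hs 0).1
      have hs0t : s 0 ≤ t := (hs 0).2
      have hsmt : s m ≤ t := (hs m).2
      have hs0sm : s 0 ≤ s m := hs0m m (le_refl m)
      have hu1 : Ico t₀ (s 0) ∪ Ico (s 0) t = Ico t₀ t := Ico_union_Ico_eq_Ico hts0 hs0t
      have hu2 : Ico (s 0) (s m) ∪ Ico (s m) t = Ico (s 0) t := Ico_union_Ico_eq_Ico hs0sm hsmt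
      have e1 : ∫ τ in Ico t₀ t, g τ * F τ ^ n
          = (∫ τ in Ico t₀ (s 0), g τ * F τ ^ n) + ∫ τ in Ico (s 0) t, g τ * F τ ^ n := by
        rw [← hu1, setIntegral_union Ico_disjoint_Ico_same measurableSet_Ico
          (hint _ _ (le_refl t₀)) (hint _ _ hts0)]
      have e2 : ∫ τ in Ico (s 0) t, g τ * F τ ^ n
          = (∫ τ in Ico (s 0) (s m), g τ * F τ ^ n) + ∫ τ in Ico (s m) t, g τ * F τ ^ n := by
        rw [← hu2, setIntegral_union Ico_disjoint_Ico_same measurableSet_Ico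
          (hint _ _ hts0) (hint _ _ ((hs m).1))]
      have e3 : ∫ τ in Ico (s 0) (s m), g τ * F τ ^ n
          = ∑ i ∈ Finset.range m, ∫ τ in Ico (s i) (s (i+1)), g τ * F τ ^ n :=
        aux_split m s hsmono (hint _ _ hts0)
      have b1 : ∫ τ in Ico t₀ (s 0), g τ * F τ ^ n ≤ 0 := by
        calc ∫ τ in Ico t₀ (s 0), g τ * F τ ^ n
            ≤ F (s 0) ^ n * (F (s 0) - F t₀) := piece (le_refl t₀) hts0
          _ = 0 := by rw [hFs0, hFt0]; ring
      have b3 : ∫ τ in Ico (s m) t, g τ * F τ ^ n ≤ 0 := by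
        calc ∫ τ in Ico (s m) t, g τ * F τ ^ n
            ≤ F t ^ n * (F t - F (s m)) := piece (hs m).1 hsmt
          _ = 0 := by rw [hFsm, ← hcdef]; ring
      have b2 : ∑ i ∈ Finset.range m, ∫ τ in Ico (s i) (s (i+1)), g τ * F τ ^ n
          ≤ ∑ i ∈ Finset.range m, ((i:ℝ)+1)^n * (c/m)^(n+1) := by
        refine Finset.sum_le_sum fun i hi => ?_
        have him : i < m := Finset.mem_range.mp hi
        calc ∫ τ in Ico (s i) (s (i+1)), g τ * F τ ^ n
            ≤ F (s (i+1)) ^ n * (F (s (i+1)) - F (s i)) := piece (hs i).1 (hsmono i him)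
          _ = (((i:ℝ)+1) * (c/m)) ^ n * ((((i:ℝ)+1) * (c/m)) - (i:ℝ) * (c/m)) := by
              rw [hFs, hFs, hmin i him.le, hmin (i+1) him]
              push_cast
              ring
          _ = ((i:ℝ)+1)^n * (c/m)^(n+1) := by
              have hb : (((i:ℝ)+1) * (c/m)) - (i:ℝ) * (c/m) = c/m := by ring
              rw [hb, mul_pow]
              ring
      have b2' : ∑ i ∈ Finset.range m, ((i:ℝ)+1)^n * (c/m)^(n+1)
          ≤ (c * (((m:ℝ)+1)/m)) ^ (n+1) / (n+1) := by
        rw [← Finset.sum_mul]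
        calc (∑ i ∈ Finset.range m, ((i:ℝ)+1)^n) * (c/m)^(n+1)
            ≤ (((m:ℝ)+1)^(n+1) / (n+1)) * (c/m)^(n+1) :=
              mul_le_mul_of_nonneg_right (aux_sum_pow n m) (by positivity)
          _ = (c * (((m:ℝ)+1)/m)) ^ (n+1) / (n+1) := by
              rw [div_mul_eq_mul_div, ← mul_pow]
              have hb : ((m:ℝ)+1) * (c/m) = c * (((m:ℝ)+1)/m) := by ring
              rw [hb]
      linarith [e1, e2, e3, b1, b2, b3, b2']
    have h1 : Tendsto (fun m : ℕ => ((m:ℝ)+1)/m) atTop (nhds 1) := by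
      have h2 : Tendsto (fun m : ℕ => 1 + 1/(m:ℝ)) atTop (nhds 1) := by
        have : Tendsto (fun n : ℕ => 1 / (n:ℝ)) atTop (nhds 0) := tendsto_one_div_atTop_nhds_zero_nat
        simpa using (tendsto_const_nhds (x := (1:ℝ)) (f := atTop)).add this
      apply h2.congr'
      filter_upwards [eventually_ge_atTop 1] with m hm
      have hm0 : (m:ℝ) ≠ 0 := by positivity
      field_simp
    have hlim : Tendsto (fun m : ℕ => (c * (((m:ℝ)+1)/m)) ^ (n+1) / (n+1)) atTop
        (nhds (c ^ (n+1) / (n+1))) := by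
      have h3 : Tendsto (fun m : ℕ => c * (((m:ℝ)+1)/m)) atTop (nhds c) := by
        simpa using h1.const_mul c
      exact (h3.pow (n+1)).div_const _
    exact ge_of_tendsto hlim (eventually_atTop.2 ⟨1, fun m hm => main m hm⟩)

/-- Abstract Grönwall-type iteration lemma: a countable family of uniformly bounded
nonnegative functions satisfying a common integral inequality with geometric weights
`2^{-j}` obeys the exponential bound `E₀(t) ≤ B e^{C₁} + (C₁^M/M!) M₀` for each `M ≥ 1`,
and hence `E₀(t) ≤ B e^{C₁}`. -/
theorem stmt_8 (t₀ : ℝ) (ht₀ : t₀ < 0) (C₀ r B M₀ : ℝ)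
    (hC₀ : 0 < C₀) (hr : 0 < r) (hB : 0 ≤ B) (hM₀ : 0 ≤ M₀)
    (f : ℝ → ℝ) (hfm : Measurable f) (hf0 : ∀ t ∈ Ico t₀ (0 : ℝ), 0 ≤ f t)
    (hfi : IntegrableOn f (Ico t₀ (0 : ℝ)))
    (C₁ : ℝ) (hC₁ : C₁ = C₀ / r * ∫ τ in Ico t₀ (0 : ℝ), f τ)
    (E : ℕ → ℝ → ℝ) (hEm : ∀ k, Measurable (E k))
    (hE0 : ∀ k, ∀ t ∈ Ico t₀ (0 : ℝ), 0 ≤ E k t ∧ E k t ≤ M₀)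
    (hErec : ∀ k, ∀ t ∈ Ico t₀ (0 : ℝ),
      E k t ≤ B + C₀ / r * ∫ τ in Ico t₀ t,
        f τ * ∑' j : ℕ, (2 : ℝ)⁻¹ ^ (j + 1) * E (j + 1) τ) :
    (∀ M : ℕ, 1 ≤ M → ∀ t ∈ Ico t₀ (0 : ℝ),
      E 0 t ≤ B * Real.exp C₁ + C₁ ^ M / (Nat.factorial M) * M₀)
    ∧ ∀ t ∈ Ico t₀ (0 : ℝ), E 0 t ≤ B * Real.exp C₁ := by
  set g : ℝ → ℝ := (Ico t₀ (0:ℝ)).indicator f with hg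
  have hgm : Measurable g := hfm.indicator measurableSet_Ico
  have hg0 : ∀ x, 0 ≤ g x := fun x => Set.indicator_nonneg (fun a ha => hf0 a ha) x
  have hgi : Integrable g := hfi.integrable_indicator measurableSet_Ico
  set F : ℝ → ℝ := fun u => ∫ s in t₀..u, g s with hF
  set c : ℝ := C₀ / r with hcdef
  have hc : 0 < c := div_pos hC₀ hr
  have hgf : ∀ t, t ≤ 0 → ∀ τ ∈ Ico t₀ t, g τ = f τ := by
    intro t ht τ hτ
    have hmem : τ ∈ Ico t₀ (0:ℝ) := ⟨hτ.1, lt_of_lt_of_le hτ.2 ht⟩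
    simp [hg, Set.indicator_of_mem hmem]
  have hFt : ∀ t, t₀ ≤ t → t ≤ 0 → F t = ∫ τ in Ico t₀ t, f τ := by
    intro t ht1 ht2
    have h1 : ∫ τ in Ico t₀ t, g τ = F t := by
      rw [aux_Ico_eq (t₀ := t₀) hgi ht1, intervalIntegral.integral_same, sub_zero]
    rw [← h1]
    exact setIntegral_congr_fun measurableSet_Ico (fun τ hτ => hgf t ht2 τ hτ)
  have hC₁' : C₁ = c * F 0 := by rw [hC₁, hFt 0 ht₀.le (le_refl 0)]
  have hFmono : Monotone F := aux_mono hg0 hgi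
  -- geometric series facts
  have hgeo : Summable (fun j : ℕ => (2:ℝ)⁻¹ ^ (j+1)) := by
    simp only [pow_succ]
    exact (summable_geometric_of_lt_one (by norm_num) (by norm_num)).mul_right _
  have hgeosum : ∑' j : ℕ, (2:ℝ)⁻¹ ^ (j+1) = 1 := by
    simp only [pow_succ]
    rw [tsum_mul_right, tsum_geometric_of_lt_one (by norm_num) (by norm_num)]
    norm_num
  -- main induction
  have key : ∀ M : ℕ, ∀ k, ∀ t ∈ Ico t₀ (0:ℝ),
      E k t ≤ B * (∑ i ∈ Finset.range M, (c * F t)^i / (Nat.factorial i))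
              + (c * F t)^M / (Nat.factorial M) * M₀ := by
    intro M
    induction M with
    | zero =>
      intro k t htm
      simpa using (hE0 k t htm).2
    | succ M IH =>
      intro k t htm
      obtain ⟨ht1, ht2⟩ := htm
      have hsub : Ico t₀ t ⊆ Ico t₀ (0:ℝ) := Ico_subset_Ico_right ht2.le
      set P : ℝ → ℝ := fun τ => B * (∑ i ∈ Finset.range M, (c * F τ)^i / (Nat.factorial i))
        + (c * F τ)^M / (Nat.factorial M) * M₀ with hP
      have hSsum : ∀ τ ∈ Ico t₀ (0:ℝ), Summable (fun j : ℕ => (2:ℝ)⁻¹ ^ (j+1) * E (j+1) τ) := by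
        intro τ hτ
        exact Summable.of_nonneg_of_le
          (fun j => mul_nonneg (by positivity) (hE0 (j+1) τ hτ).1)
          (fun j => mul_le_mul_of_nonneg_left (hE0 (j+1) τ hτ).2 (by positivity))
          (hgeo.mul_right M₀)
      have hSP : ∀ τ ∈ Ico t₀ (0:ℝ), (∑' j : ℕ, (2:ℝ)⁻¹ ^ (j+1) * E (j+1) τ) ≤ P τ := by
        intro τ hτ
        have h1 : (∑' j : ℕ, (2:ℝ)⁻¹ ^ (j+1) * E (j+1) τ)
            ≤ ∑' j : ℕ, (2:ℝ)⁻¹ ^ (j+1) * P τ := by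
          refine Summable.tsum_le_tsum (fun j => ?_) (hSsum τ hτ) (hgeo.mul_right _)
          exact mul_le_mul_of_nonneg_left (IH (j+1) τ hτ) (by positivity)
        rwa [tsum_mul_right, hgeosum, one_mul] at h1
      have hqint : ∀ i : ℕ, IntegrableOn (fun τ => g τ * F τ ^ i) (Ico t₀ t) :=
        fun i => aux_int hgm hg0 hgi (le_refl t₀) ht1 i
      have expand : (fun τ => g τ * P τ) = fun τ =>
          (∑ i ∈ Finset.range M, (B * (c^i / (Nat.factorial i))) * (g τ * F τ ^ i))
          + (M₀ * (c^M / (Nat.factorial M))) * (g τ * F τ ^ M) := by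
        funext τ
        simp only [hP]
        rw [mul_add]
        congr 1
        · rw [Finset.mul_sum, Finset.mul_sum]
          exact Finset.sum_congr rfl fun i _ => by rw [mul_pow]; ring
        · rw [mul_pow]; ring
      have hgPint : IntegrableOn (fun τ => g τ * P τ) (Ico t₀ t) := by
        rw [expand]
        exact (integrable_finset_sum _ fun i _ => (hqint i).const_mul _).add
          ((hqint M).const_mul _)
      have hIeq : ∫ τ in Ico t₀ t, g τ * P τ
          = (∑ i ∈ Finset.range M,
              (B * (c^i / (Nat.factorial i))) * ∫ τ in Ico t₀ t, g τ * F τ ^ i)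
            + (M₀ * (c^M / (Nat.factorial M))) * ∫ τ in Ico t₀ t, g τ * F τ ^ M := by
        rw [expand, integral_add (integrable_finset_sum _ fun i _ => (hqint i).const_mul _)
          ((hqint M).const_mul _)]
        congr 1
        · rw [integral_finset_sum _ (fun i _ => (hqint i).const_mul _)]
          exact Finset.sum_congr rfl fun i _ => integral_const_mul _ _
        · exact integral_const_mul _ _
      have hq : ∀ i : ℕ, ∫ τ in Ico t₀ t, g τ * F τ ^ i ≤ F t ^ (i+1) / ((i:ℝ)+1) :=
        fun i => aux_key hgm hg0 hgi i ht1
      have hqnn : ∀ i : ℕ, 0 ≤ ∫ τ in Ico t₀ t, g τ * F τ ^ i := by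
        intro i
        apply setIntegral_nonneg measurableSet_Ico
        intro τ hτ
        exact mul_nonneg (hg0 τ) (pow_nonneg (aux_F_nonneg hg0 hgi hτ.1) i)
      have hrec := hErec k t ⟨ht1, ht2⟩
      have hmono2 : ∫ τ in Ico t₀ t, f τ * (∑' j : ℕ, (2:ℝ)⁻¹ ^ (j+1) * E (j+1) τ)
          ≤ ∫ τ in Ico t₀ t, g τ * P τ := by
        apply integral_mono_of_nonneg
        · filter_upwards [ae_restrict_mem measurableSet_Ico] with τ hτ
          exact mul_nonneg (hf0 τ (hsub hτ))
            (tsum_nonneg fun j => mul_nonneg (by positivity) (hE0 (j+1) τ (hsub hτ)).1)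
        · exact hgPint
        · filter_upwards [ae_restrict_mem measurableSet_Ico] with τ hτ
          rw [show g τ = f τ from hgf t ht2.le τ hτ] at *
          calc f τ * (∑' j : ℕ, (2:ℝ)⁻¹ ^ (j+1) * E (j+1) τ)
              ≤ f τ * P τ := mul_le_mul_of_nonneg_left (hSP τ (hsub hτ)) (hf0 τ (hsub hτ))
            _ = f τ * P τ := rfl
      have hterm : ∀ i : ℕ, c * ((B * (c^i/(Nat.factorial i))) * (F t^(i+1)/((i:ℝ)+1)))
          = B * ((c*F t)^(i+1) / (Nat.factorial (i+1))) := by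
        intro i
        have h1 : ((Nat.factorial (i+1) : ℝ)) = ((i:ℝ)+1) * (Nat.factorial i) := by
          push_cast [Nat.factorial_succ]; ring
        have h2 : (Nat.factorial i : ℝ) ≠ 0 := Nat.cast_ne_zero.mpr (Nat.factorial_ne_zero i)
        have h3 : ((i:ℝ)+1) ≠ 0 := by positivity
        rw [h1, mul_pow]
        field_simp
        ring
      have htermM : c * ((M₀ * (c^M/(Nat.factorial M))) * (F t^(M+1)/((M:ℝ)+1)))
          = (c*F t)^(M+1) / (Nat.factorial (M+1)) * M₀ := by
        have h1 : ((Nat.factorial (M+1) : ℝ)) = ((M:ℝ)+1) * (Nat.factorial M) := by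
          push_cast [Nat.factorial_succ]; ring
        have h2 : (Nat.factorial M : ℝ) ≠ 0 := Nat.cast_ne_zero.mpr (Nat.factorial_ne_zero M)
        have h3 : ((M:ℝ)+1) ≠ 0 := by positivity
        rw [h1, mul_pow]
        field_simp
        ring
      have hsum : B * (∑ i ∈ Finset.range (M+1), (c*F t)^i/(Nat.factorial i))
          = (∑ i ∈ Finset.range M, B * ((c*F t)^(i+1)/(Nat.factorial (i+1)))) + B := by
        rw [Finset.sum_range_succ', mul_add, Finset.mul_sum]
        simp
      calc E k t ≤ B + c * ∫ τ in Ico t₀ t,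
            f τ * (∑' j : ℕ, (2:ℝ)⁻¹ ^ (j+1) * E (j+1) τ) := hrec
        _ ≤ B + c * ∫ τ in Ico t₀ t, g τ * P τ := by
            have := mul_le_mul_of_nonneg_left hmono2 hc.le
            linarith
        _ = B + c * ((∑ i ∈ Finset.range M,
              (B * (c^i / (Nat.factorial i))) * ∫ τ in Ico t₀ t, g τ * F τ ^ i)
            + (M₀ * (c^M / (Nat.factorial M))) * ∫ τ in Ico t₀ t, g τ * F τ ^ M) := by
            rw [hIeq]
        _ ≤ B + c * ((∑ i ∈ Finset.range M,
              (B * (c^i / (Nat.factorial i))) * (F t^(i+1)/((i:ℝ)+1)))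
            + (M₀ * (c^M / (Nat.factorial M))) * (F t^(M+1)/((M:ℝ)+1))) := by
            apply add_le_add_right
            apply mul_le_mul_of_nonneg_left _ hc.le
            apply add_le_add
            · refine Finset.sum_le_sum fun i _ => ?_
              exact mul_le_mul_of_nonneg_left (hq i) (mul_nonneg hB (by positivity))
            · exact mul_le_mul_of_nonneg_left (hq M) (mul_nonneg hM₀ (by positivity))
        _ = B * (∑ i ∈ Finset.range (M+1), (c * F t)^i / (Nat.factorial i))
            + (c * F t)^(M+1) / (Nat.factorial (M+1)) * M₀ := by
            rw [mul_add, Finset.mul_sum, Finset.sum_congr rfl (fun i _ => hterm i), htermM,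
              hsum]
            ring
  -- conclusions
  have hFnn : ∀ t ∈ Ico t₀ (0:ℝ), 0 ≤ F t := fun t htm => aux_F_nonneg hg0 hgi htm.1
  have hC₁nn : 0 ≤ C₁ := by
    rw [hC₁']
    exact mul_nonneg hc.le (aux_F_nonneg hg0 hgi ht₀.le)
  have part1 : ∀ M : ℕ, ∀ t ∈ Ico t₀ (0:ℝ),
      E 0 t ≤ B * Real.exp C₁ + C₁^M / (Nat.factorial M) * M₀ := by
    intro M t htm
    have hnn : 0 ≤ c * F t := mul_nonneg hc.le (hFnn t htm)
    have hle : c * F t ≤ C₁ := by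
      rw [hC₁']
      exact mul_le_mul_of_nonneg_left (hFmono htm.2.le) hc.le
    calc E 0 t ≤ B * (∑ i ∈ Finset.range M, (c*F t)^i/(Nat.factorial i))
          + (c*F t)^M/(Nat.factorial M) * M₀ := key M 0 t htm
      _ ≤ B * (∑ i ∈ Finset.range M, C₁^i/(Nat.factorial i))
          + C₁^M/(Nat.factorial M) * M₀ := by
          apply add_le_add
          · refine mul_le_mul_of_nonneg_left (Finset.sum_le_sum fun i _ => ?_) hB
            have hfac : (0:ℝ) < (Nat.factorial i : ℝ) := by
              exact_mod_cast Nat.factorial_pos i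
            exact (div_le_div_iff_of_pos_right hfac).mpr (pow_le_pow_left₀ hnn hle i)
          · refine mul_le_mul_of_nonneg_right ?_ hM₀
            have hfac : (0:ℝ) < (Nat.factorial M : ℝ) := by
              exact_mod_cast Nat.factorial_pos M
            exact (div_le_div_iff_of_pos_right hfac).mpr (pow_le_pow_left₀ hnn hle M)
      _ ≤ B * Real.exp C₁ + C₁^M/(Nat.factorial M) * M₀ := by
          apply add_le_add_left
          exact mul_le_mul_of_nonneg_left (Real.sum_le_exp_of_nonneg hC₁nn M) hB
  refine ⟨fun M _ t htm => part1 M t htm, ?_⟩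
  intro t htm
  have h1 : Filter.Tendsto (fun M : ℕ => C₁^M / (Nat.factorial M : ℝ)) Filter.atTop (nhds 0) :=
    FloorSemiring.tendsto_pow_div_factorial_atTop C₁
  have hlim : Filter.Tendsto (fun M : ℕ => B * Real.exp C₁ + C₁^M / (Nat.factorial M) * M₀)
      Filter.atTop (nhds (B * Real.exp C₁)) := by
    have h2 := h1.mul_const M₀
    simpa using (tendsto_const_nhds (x := B * Real.exp C₁) (f := Filter.atTop)).add h2
  exact ge_of_tendsto hlim (Filter.Eventually.of_forall fun M => part1 M t htm)
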